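/- arXiv:1910.10434 — 2 statements merged into one kernel-verified Lean document; each statement's English description precedes it below -/
import Mathlib

section
/- Let n ≥ 1 and m ≥ 1 be natural numbers. Throw f = ⌊n/4⌋ balls independently and uniformly at random into m bins. Then the probability that some bin receives at least (13/12)·(n/m) balls is at most m·exp(−n/(300·m)). -/
open MeasureTheory ProbabilityTheory
open scoped ENNReal

/-- core of OmniLedger's shard-honesty lemma, `p = 1/4`, `a = 1/3`.
Throw `f = ⌊n/4⌋` balls independently and uniformly at random into `m` bins.  Then the
probability that some bin receives at least `(13/12)·(n/m)` balls is at most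
`m·exp(−n/(300·m))`. -/
theorem omniledger_shard_overload_bound
    {Ω : Type*} [MeasurableSpace Ω] (P : Measure Ω) [IsProbabilityMeasure P]
    (n m : ℕ) (hn : 1 ≤ n) (hm : 1 ≤ m)
    (B : Fin (n / 4) → Ω → Fin m)
    (hmeas : ∀ b, Measurable (B b))
    (hindep : iIndepFun B P)
    (hunif : ∀ b (i : Fin m), P {ω | B b ω = i} = (1 : ℝ≥0∞) / m) :
    (P {ω | ∃ i : Fin m, (13 / 12 : ℝ) * ((n : ℝ) / m)
        ≤ ((Finset.univ.filter fun b => B b ω = i).card : ℝ)}).toReal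
      ≤ (m : ℝ) * Real.exp (-((n : ℝ) / (300 * m))) := by
  classical
  have hm0 : (0 : ℝ) < m := by exact_mod_cast hm
  have hn0 : (0 : ℝ) < n := by exact_mod_cast hn
  set ε : ℝ := (13 / 12 : ℝ) * ((n : ℝ) / m) with hε
  -- per-bin Chernoff bound
  have key : ∀ i : Fin m,
      (P {ω | ε ≤ ((Finset.univ.filter fun b => B b ω = i).card : ℝ)}).toReal
        ≤ Real.exp (-((n : ℝ) / (300 * m))) := by
    intro i
    set g : Fin m → ℝ := fun x => if x = i then 1 else 0 with hg
    set X : Fin (n/4) → Ω → ℝ := fun b => g ∘ B b with hXdef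
    have hXmeas : ∀ b, Measurable (X b) := fun b =>
      (measurable_of_countable g).comp (hmeas b)
    have hindepX : iIndepFun X P :=
      hindep.comp (fun _ => g) (fun _ => measurable_of_countable g)
    have hsetm : ∀ b : Fin (n/4), MeasurableSet {ω | B b ω = i} := by
      intro b
      have : {ω | B b ω = i} = B b ⁻¹' {i} := by ext ω; simp
      rw [this]
      exact (hmeas b) (measurableSet_singleton i)
    -- each exp(1 * X b ·) as an indicator plus constant
    have hrw : ∀ b : Fin (n/4), (fun ω => Real.exp (1 * X b ω))
        = fun ω => Set.indicator {ω | B b ω = i} (fun _ => Real.exp 1 - 1) ω + 1 := by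
      intro b
      funext ω
      by_cases h : B b ω = i
      · simp [X, g, h, Set.indicator_of_mem, Set.mem_setOf_eq]
      · simp [X, g, h, Set.indicator_of_notMem, Set.mem_setOf_eq]
    have hPtr : ∀ b : Fin (n/4), (P {ω | B b ω = i}).toReal = 1 / (m : ℝ) := by
      intro b
      rw [hunif b i]
      rw [ENNReal.toReal_div]
      simp
    have hint : ∀ b : Fin (n/4), Integrable (fun ω => Real.exp (1 * X b ω)) P := by
      intro b
      rw [hrw b]
      exact ((integrable_const (Real.exp 1 - 1)).indicator (hsetm b)).add (integrable_const 1)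
    have hmgf : ∀ b : Fin (n/4), mgf (X b) P 1 = 1 + (Real.exp 1 - 1) / m := by
      intro b
      have : mgf (X b) P 1 = ∫ ω, Real.exp (1 * X b ω) ∂P := rfl
      rw [this, hrw b, integral_add (((integrable_const (Real.exp 1 - 1)).indicator (hsetm b)))
        (integrable_const 1)]
      rw [integral_indicator_const _ (hsetm b)]
      simp [hPtr b, smul_eq_mul]
      rw [measureReal_def, hPtr b]
      ring
    -- sums
    have hsum_eq : ∀ ω, (∑ b : Fin (n/4), X b) ω
        = ((Finset.univ.filter fun b => B b ω = i).card : ℝ) := by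
      intro ω
      simp only [Finset.sum_apply]
      rw [← Finset.sum_boole]
      rfl
    have hintS : Integrable (fun ω => Real.exp (1 * (∑ b : Fin (n/4), X b) ω)) P :=
      hindepX.integrable_exp_mul_sum hXmeas (fun b _ => hint b)
    have hcher := measure_ge_le_exp_mul_mgf (μ := P) (X := ∑ b : Fin (n/4), X b) ε
      (by norm_num : (0:ℝ) ≤ 1) hintS
    have hmgfsum : mgf (∑ b : Fin (n/4), X b) P 1 = (1 + (Real.exp 1 - 1) / m) ^ (n/4) := by
      rw [hindepX.mgf_sum hXmeas Finset.univ]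
      rw [Finset.prod_congr rfl (fun b _ => hmgf b), Finset.prod_const, Finset.card_univ,
        Fintype.card_fin]
    have hsets : {ω | ε ≤ (∑ b : Fin (n/4), X b) ω}
        = {ω | ε ≤ ((Finset.univ.filter fun b => B b ω = i).card : ℝ)} := by
      ext ω; rw [Set.mem_setOf_eq, Set.mem_setOf_eq, hsum_eq ω]
    rw [hsets, hmgfsum] at hcher
    refine hcher.trans ?_
    -- numeric estimate
    have he2 : (1 : ℝ) ≤ Real.exp 1 := by
      have := Real.add_one_le_exp (1:ℝ); linarith
    have he1 : (0 : ℝ) ≤ (Real.exp 1 - 1) / m := by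
      apply div_nonneg _ hm0.le; linarith
    have hc : (1 + (Real.exp 1 - 1) / m) ^ (n/4) ≤ Real.exp ((Real.exp 1 - 1) / m) ^ (n/4) := by
      apply pow_le_pow_left₀ (by linarith) (by
        have := Real.add_one_le_exp ((Real.exp 1 - 1) / m)
        linarith)
    have hexp_pow : Real.exp ((Real.exp 1 - 1) / m) ^ (n/4)
        = Real.exp (((n/4 : ℕ) : ℝ) * ((Real.exp 1 - 1) / m)) := by
      rw [← Real.exp_nat_mul]
    have h1 : Real.exp (-1 * ε) * (1 + (Real.exp 1 - 1) / m) ^ (n/4)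
        ≤ Real.exp (-ε + ((n/4 : ℕ) : ℝ) * ((Real.exp 1 - 1) / m)) := by
      rw [Real.exp_add]
      have : Real.exp (-1 * ε) = Real.exp (-ε) := by norm_num
      rw [this]
      apply mul_le_mul_of_nonneg_left _ (Real.exp_pos _).le
      rw [← hexp_pow]; exact hc
    refine h1.trans (Real.exp_le_exp.2 ?_)
    -- show -ε + f*(e-1)/m ≤ -(n/(300*m))
    have hfle : ((n/4 : ℕ) : ℝ) ≤ (n : ℝ) / 4 := by
      exact_mod_cast Nat.cast_div_le (α := ℝ)
    have he : Real.exp 1 < 2.7182818286 := Real.exp_one_lt_d9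
    have step : ((n/4 : ℕ) : ℝ) * ((Real.exp 1 - 1) / m) ≤ ((n : ℝ) / 4) * ((Real.exp 1 - 1) / m) := by
      apply mul_le_mul_of_nonneg_right hfle he1
    have key2 : -(13/12 : ℝ) + (Real.exp 1 - 1) / 4 ≤ -(1/300 : ℝ) := by nlinarith
    have hnm : (0 : ℝ) ≤ (n : ℝ) / m := (div_pos hn0 hm0).le
    have goal2 : -ε + (n : ℝ)/4 * ((Real.exp 1 - 1)/m) ≤ -((n : ℝ) / (300 * m)) := by
      have lhs_eq : -ε + (n : ℝ)/4 * ((Real.exp 1 - 1)/m)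
          = ((n : ℝ)/m) * (-(13/12 : ℝ) + (Real.exp 1 - 1) / 4) := by rw [hε]; ring
      have rhs_eq : -((n : ℝ) / (300 * m)) = ((n : ℝ)/m) * (-(1/300 : ℝ)) := by
        field_simp
      rw [lhs_eq, rhs_eq]
      exact mul_le_mul_of_nonneg_left key2 hnm
    linarith
  -- union bound
  have hunion : {ω | ∃ i : Fin m, ε ≤ ((Finset.univ.filter fun b => B b ω = i).card : ℝ)}
      = ⋃ i : Fin m, {ω | ε ≤ ((Finset.univ.filter fun b => B b ω = i).card : ℝ)} := by
    ext ω; simp [Set.mem_iUnion]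
  have hle : P {ω | ∃ i : Fin m, ε ≤ ((Finset.univ.filter fun b => B b ω = i).card : ℝ)}
      ≤ ∑ i : Fin m, P {ω | ε ≤ ((Finset.univ.filter fun b => B b ω = i).card : ℝ)} := by
    rw [hunion]
    exact (measure_iUnion_le _).trans_eq (tsum_fintype _)
  have hfin : (∑ i : Fin m, P {ω | ε ≤ ((Finset.univ.filter fun b => B b ω = i).card : ℝ)})
      ≠ ⊤ := by
    apply ne_of_lt
    refine lt_of_le_of_lt (Finset.sum_le_sum (fun i _ => prob_le_one)) ?_
    simp [ENNReal.sum_lt_top]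
  calc (P {ω | ∃ i : Fin m, (13 / 12 : ℝ) * ((n : ℝ) / m)
        ≤ ((Finset.univ.filter fun b => B b ω = i).card : ℝ)}).toReal
      ≤ (∑ i : Fin m,
          P {ω | ε ≤ ((Finset.univ.filter fun b => B b ω = i).card : ℝ)}).toReal :=
        ENNReal.toReal_mono hfin hle
    _ = ∑ i : Fin m,
          (P {ω | ε ≤ ((Finset.univ.filter fun b => B b ω = i).card : ℝ)}).toReal := by
        rw [ENNReal.toReal_sum (fun i _ => measure_ne_top P _)]
    _ ≤ ∑ _i : Fin m, Real.exp (-((n : ℝ) / (300 * m))) :=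
        Finset.sum_le_sum (fun i _ => key i)
    _ = (m : ℝ) * Real.exp (-((n : ℝ) / (300 * m))) := by
        rw [Finset.sum_const, Finset.card_univ, Fintype.card_fin, nsmul_eq_mul]
end

section
/- Let n ≥ 1 and m ≥ 1 be natural numbers. Throw f = ⌊n/3⌋ balls independently and uniformly at random into m bins. Then the probability that some bin receives at least (7/6)·(n/m) balls is at most m·exp(−n/(78·m)). -/
open MeasureTheory ProbabilityTheory
open scoped ENNReal

private lemma rc_bin_bound
    {Ω : Type*} [MeasurableSpace Ω] (P : Measure Ω) [IsProbabilityMeasure P]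
    (n m : ℕ) (hn : 1 ≤ n) (hm : 1 ≤ m)
    (B : Fin (n / 3) → Ω → Fin m)
    (hmeas : ∀ b, Measurable (B b))
    (hindep : iIndepFun B P)
    (hunif : ∀ b (i : Fin m), P {ω | B b ω = i} = (1 : ℝ≥0∞) / m) (i : Fin m) :
    (P {ω | (7 / 6 : ℝ) * ((n : ℝ) / m)
        ≤ ((Finset.univ.filter fun b => B b ω = i).card : ℝ)}).toReal
      ≤ Real.exp (-((n : ℝ) / (78 * m))) := by
  classical
  have hm0 : (0 : ℝ) < m := by exact_mod_cast hm
  set X : Fin (n / 3) → Ω → ℝ := fun b ω => if B b ω = i then 1 else 0 with hX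
  have hXmeas : ∀ b, Measurable (X b) := by
    intro b
    exact Measurable.comp (measurable_of_countable fun j : Fin m => if j = i then (1:ℝ) else 0)
      (hmeas b)
  have hindepX : iIndepFun X P := by
    exact hindep.comp (fun _ j => if j = i then (1:ℝ) else 0)
      (fun _ => measurable_of_countable _)
  have hcard : ∀ ω, ((Finset.univ.filter fun b => B b ω = i).card : ℝ)
      = ∑ b, X b ω := by
    intro ω
    rw [Finset.sum_boole]
  set S : Ω → ℝ := ∑ b, X b with hS
  have hSapp : ∀ ω, S ω = ∑ b, X b ω := fun ω => by simp [hS]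
  have hset : {ω | (7 / 6 : ℝ) * ((n : ℝ) / m)
      ≤ ((Finset.univ.filter fun b => B b ω = i).card : ℝ)}
      = {ω | (7 / 6 : ℝ) * ((n : ℝ) / m) ≤ S ω} := by
    ext ω; simp only [Set.mem_setOf_eq, hcard ω, hSapp ω]
  -- integrability of exp(1 * S)
  have hSbound : ∀ ω, S ω ≤ (n / 3 : ℕ) := by
    intro ω
    rw [hSapp, ← hcard]
    have h1 : (Finset.filter (fun b => B b ω = i) Finset.univ).card ≤ n / 3 := by
      simpa using Finset.card_filter_le Finset.univ (fun b => B b ω = i)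
    exact_mod_cast h1
  have hSnonneg : ∀ ω, 0 ≤ S ω := by
    intro ω
    rw [hSapp]
    exact Finset.sum_nonneg fun b _ => by simp [hX]; positivity
  have hSmeas : Measurable S := by
    have heq : (∑ b, X b) = fun ω => ∑ b, X b ω := by funext ω; simp
    rw [hS, heq]; exact Finset.measurable_sum _ fun b _ => hXmeas b
  have h_int : Integrable (fun ω => Real.exp (1 * S ω)) P := by
    refine Integrable.mono' (integrable_const (Real.exp ((n / 3 : ℕ) : ℝ))) ?_ ?_
    · exact ((hSmeas.const_mul 1).exp).aestronglyMeasurable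
    · filter_upwards with ω
      rw [Real.norm_of_nonneg (Real.exp_nonneg _)]
      exact Real.exp_le_exp.2 (by simpa using hSbound ω)
  -- Chernoff
  have hcher := measure_ge_le_exp_mul_mgf (X := S) (μ := P)
    ((7 / 6 : ℝ) * ((n : ℝ) / m)) zero_le_one h_int
  -- mgf of each indicator
  have hmgf : ∀ b, mgf (X b) P 1 = 1 + (Real.exp 1 - 1) / m := by
    intro b
    have hA : MeasurableSet {ω | B b ω = i} := (hmeas b) (measurableSet_singleton i)
    have : (fun ω => Real.exp (1 * X b ω))
        = fun ω => Set.indicator {ω | B b ω = i} (fun _ => Real.exp 1 - 1) ω + 1 := by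
      funext ω
      by_cases h : B b ω = i <;> simp [hX, h, Set.indicator_of_mem, Set.indicator_of_notMem,
        Set.mem_setOf_eq]
    rw [mgf, this, integral_add ((integrable_indicator_iff hA).2 (integrableOn_const
      (measure_ne_top _ _))) (integrable_const 1),
      integral_indicator_const _ hA, integral_const]
    have hPA : (P {ω | B b ω = i}).toReal = 1 / m := by
      rw [hunif b i, ENNReal.toReal_div]
      simp
    simp only [measureReal_def]
    rw [hPA]
    simp [measure_univ]
    ring
  have hmgfS : mgf S P 1 = ∏ _b : Fin (n / 3), (1 + (Real.exp 1 - 1) / m) := by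
    rw [hS, hindepX.mgf_sum hXmeas]
    exact Finset.prod_congr rfl fun b _ => hmgf b
  have hfactor : (1 : ℝ) + (Real.exp 1 - 1) / m ≤ Real.exp ((Real.exp 1 - 1) / m) := by
    have := Real.add_one_le_exp ((Real.exp 1 - 1) / m)
    linarith
  have hfactor0 : (0 : ℝ) ≤ 1 + (Real.exp 1 - 1) / m := by
    have h1 : (1:ℝ) ≤ Real.exp 1 := by
      have := Real.add_one_le_exp (1:ℝ); linarith
    have h2 : (0:ℝ) ≤ (Real.exp 1 - 1) / m := div_nonneg (by linarith) hm0.le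
    linarith
  have hmgfS_le : mgf S P 1 ≤ Real.exp (((n/3 : ℕ) : ℝ) * ((Real.exp 1 - 1) / m)) := by
    rw [hmgfS, Finset.prod_const]
    calc (1 + (Real.exp 1 - 1) / m) ^ (Finset.univ : Finset (Fin (n/3))).card
        ≤ Real.exp ((Real.exp 1 - 1) / m) ^ (Finset.univ : Finset (Fin (n/3))).card :=
          pow_le_pow_left₀ hfactor0 hfactor _
      _ = Real.exp (((n/3 : ℕ) : ℝ) * ((Real.exp 1 - 1) / m)) := by
          rw [← Real.exp_nat_mul]
          simp
  -- numeric comparison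
  have hf_le : ((n / 3 : ℕ) : ℝ) ≤ (n : ℝ) / 3 := by
    exact_mod_cast Nat.cast_div_le
  have he : Real.exp 1 ≤ 2.7182818286 := le_of_lt Real.exp_one_lt_d9
  have he1 : (1:ℝ) ≤ Real.exp 1 := by
    have := Real.add_one_le_exp (1:ℝ); linarith
  have hkey : Real.exp (-1 * ((7 / 6 : ℝ) * ((n : ℝ) / m)))
      * Real.exp (((n/3 : ℕ) : ℝ) * ((Real.exp 1 - 1) / m))
      ≤ Real.exp (-((n : ℝ) / (78 * m))) := by
    rw [← Real.exp_add, Real.exp_le_exp]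
    have hn0 : (1:ℝ) ≤ (n:ℝ) := by exact_mod_cast hn
    have hf0 : (0:ℝ) ≤ ((n / 3 : ℕ) : ℝ) := Nat.cast_nonneg _
    have hmain : ((n / 3 : ℕ) : ℝ) * (Real.exp 1 - 1) + (n:ℝ) / 78 ≤ 7 / 6 * n := by
      nlinarith [mul_le_mul_of_nonneg_right hf_le (by linarith : (0:ℝ) ≤ Real.exp 1 - 1),
        mul_nonneg (by linarith : (0:ℝ) ≤ (n:ℝ))
          (by linarith : (0:ℝ) ≤ 2.7182818286 - Real.exp 1)]
    rw [show -1 * ((7:ℝ) / 6 * ((n:ℝ) / m)) + ((n / 3 : ℕ) : ℝ) * ((Real.exp 1 - 1) / m)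
        = (((n / 3 : ℕ) : ℝ) * (Real.exp 1 - 1) - 7 / 6 * n) / m by field_simp; ring,
      show -((n:ℝ) / (78 * m)) = (-((n:ℝ) / 78)) / m by field_simp]
    gcongr
    linarith
  calc (P {ω | (7 / 6 : ℝ) * ((n : ℝ) / m)
        ≤ ((Finset.univ.filter fun b => B b ω = i).card : ℝ)}).toReal
      = (P {ω | (7 / 6 : ℝ) * ((n : ℝ) / m) ≤ S ω}).toReal := by rw [hset]
    _ ≤ Real.exp (-1 * ((7 / 6 : ℝ) * ((n : ℝ) / m))) * mgf S P 1 := hcher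
    _ ≤ Real.exp (-1 * ((7 / 6 : ℝ) * ((n : ℝ) / m)))
        * Real.exp (((n/3 : ℕ) : ℝ) * ((Real.exp 1 - 1) / m)) := by
        exact mul_le_mul_of_nonneg_left hmgfS_le (Real.exp_nonneg _)
    _ ≤ Real.exp (-((n : ℝ) / (78 * m))) := hkey

/-- core of RapidChain's shard-honesty lemma, `p = 1/3`, `a = 1/2`.
Throw `f = ⌊n/3⌋` balls independently and uniformly at random into `m` bins.  Then the
probability that some bin receives at least `(7/6)·(n/m)` balls is at most
`m·exp(−n/(78·m))`. -/
theorem rapidchain_shard_overload_bound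
    {Ω : Type*} [MeasurableSpace Ω] (P : Measure Ω) [IsProbabilityMeasure P]
    (n m : ℕ) (hn : 1 ≤ n) (hm : 1 ≤ m)
    (B : Fin (n / 3) → Ω → Fin m)
    (hmeas : ∀ b, Measurable (B b))
    (hindep : iIndepFun B P)
    (hunif : ∀ b (i : Fin m), P {ω | B b ω = i} = (1 : ℝ≥0∞) / m) :
    (P {ω | ∃ i : Fin m, (7 / 6 : ℝ) * ((n : ℝ) / m)
        ≤ ((Finset.univ.filter fun b => B b ω = i).card : ℝ)}).toReal
      ≤ (m : ℝ) * Real.exp (-((n : ℝ) / (78 * m))) := by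
  classical
  have hset : {ω | ∃ i : Fin m, (7 / 6 : ℝ) * ((n : ℝ) / m)
      ≤ ((Finset.univ.filter fun b => B b ω = i).card : ℝ)}
      = ⋃ i : Fin m, {ω | (7 / 6 : ℝ) * ((n : ℝ) / m)
      ≤ ((Finset.univ.filter fun b => B b ω = i).card : ℝ)} := by
    ext ω; simp [Set.mem_iUnion]
  have hunion : P {ω | ∃ i : Fin m, (7 / 6 : ℝ) * ((n : ℝ) / m)
      ≤ ((Finset.univ.filter fun b => B b ω = i).card : ℝ)}
      ≤ ∑ i : Fin m, P {ω | (7 / 6 : ℝ) * ((n : ℝ) / m)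
      ≤ ((Finset.univ.filter fun b => B b ω = i).card : ℝ)} := by
    rw [hset]
    exact measure_iUnion_fintype_le _ _
  have hfin : ∑ i : Fin m, P {ω | (7 / 6 : ℝ) * ((n : ℝ) / m)
      ≤ ((Finset.univ.filter fun b => B b ω = i).card : ℝ)} ≠ ∞ := by
    refine ne_of_lt (lt_of_le_of_lt (Finset.sum_le_sum fun i _ => prob_le_one) ?_)
    simp only [Finset.sum_const, Finset.card_univ, Fintype.card_fin, nsmul_eq_mul, mul_one]
    exact ENNReal.natCast_lt_top m
  calc (P {ω | ∃ i : Fin m, (7 / 6 : ℝ) * ((n : ℝ) / m)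
        ≤ ((Finset.univ.filter fun b => B b ω = i).card : ℝ)}).toReal
      ≤ (∑ i : Fin m, P {ω | (7 / 6 : ℝ) * ((n : ℝ) / m)
        ≤ ((Finset.univ.filter fun b => B b ω = i).card : ℝ)}).toReal :=
        ENNReal.toReal_mono hfin hunion
    _ = ∑ i : Fin m, (P {ω | (7 / 6 : ℝ) * ((n : ℝ) / m)
        ≤ ((Finset.univ.filter fun b => B b ω = i).card : ℝ)}).toReal := by
        rw [ENNReal.toReal_sum fun i _ => measure_ne_top _ _]
    _ ≤ ∑ _i : Fin m, Real.exp (-((n : ℝ) / (78 * m))) :=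
        Finset.sum_le_sum fun i _ => rc_bin_bound P n m hn hm B hmeas hindep hunif i
    _ = (m : ℝ) * Real.exp (-((n : ℝ) / (78 * m))) := by
        simp [Finset.sum_const, mul_comm]
end
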